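/- For any edge e of a graph X and any integer k ≥ 1, there are only finitely many tight cuts A with |δA| = k such that e ∈ δA. -/

import Mathlib

open Set

variable {V : Type*}

/-- The coboundary of a vertex set: edges with one endpoint in `A` and one outside. -/
def cobound (G : SimpleGraph V) (A : Set V) : Set (Sym2 V) :=
  {e | e ∈ G.edgeSet ∧ ∃ u v, e = s(u, v) ∧ u ∈ A ∧ v ∉ A}

/-- A cut is a vertex set with finite coboundary. -/
def IsCut (G : SimpleGraph V) (A : Set V) : Prop := (cobound G A).Finite

/-- A cut is tight if both sides induce connected subgraphs. -/
def Tight (G : SimpleGraph V) (A : Set V) : Prop :=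
  (G.induce A).Connected ∧ (G.induce Aᶜ).Connected

/-- Any walk from inside `A` to outside `A` contains a crossing edge. -/
lemma exists_cross {G : SimpleGraph V} {A : Set V} :
    ∀ {x y : V} (W : G.Walk x y), x ∈ A → y ∉ A →
      ∃ u v, u ∈ A ∧ v ∉ A ∧ s(u, v) ∈ W.edges := by
  intro x y W
  induction W with
  | nil => intro hx hy; exact absurd hx hy
  | @cons a b c h p ih =>
    intro hx hy
    by_cases hb : b ∈ A
    · obtain ⟨u, v, h1, h2, h3⟩ := ih hb hy
      exact ⟨u, v, h1, h2, by simp [h3]⟩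
    · exact ⟨a, b, hx, hb, by simp⟩

/-- If the induced graph on `B` is connected and `f` has an endpoint outside `B`, then
vertices of `B` remain reachable from one another after deleting `f`. -/
lemma reach_del {G : SimpleGraph V} {B : Set V} (h : (G.induce B).Connected)
    {a b : V} (ha : a ∈ B) (hb : b ∈ B) {f : Sym2 V} {z : V} (hz : z ∈ f) (hzB : z ∉ B) :
    (G.deleteEdges {f}).Reachable a b := by
  obtain ⟨W⟩ := h.preconnected ⟨a, ha⟩ ⟨b, hb⟩
  let φ : G.induce B →g G.deleteEdges {f} :=
    ⟨Subtype.val, by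
      intro p q hpq
      have hadj : G.Adj ↑p ↑q := hpq
      rw [SimpleGraph.deleteEdges_adj]
      refine ⟨hadj, fun hmem => ?_⟩
      rw [Set.mem_singleton_iff] at hmem
      rw [← hmem] at hz
      rcases Sym2.mem_iff.mp hz with rfl | rfl
      exacts [hzB p.2, hzB q.2]⟩
  exact ⟨W.map φ⟩

/-- If `u ∈ A`, `v ∉ A`, `A` is tight, and `u, v` are not reachable after deleting `s(u,v)`,
then `A` is exactly the reachability set of `u` in `G - s(u,v)`. -/
lemma eq_reach {G : SimpleGraph V} {A : Set V} {u v : V}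
    (ht : Tight G A) (hu : u ∈ A) (hv : v ∉ A)
    (hnr : ¬ (G.deleteEdges {s(u, v)}).Reachable u v) :
    A = {w | (G.deleteEdges {s(u, v)}).Reachable u w} := by
  have huc : u ∉ Aᶜ := fun h => h hu
  ext w
  simp only [Set.mem_setOf_eq]
  constructor
  · intro hw
    exact reach_del ht.1 hu hw (Sym2.mem_mk_right u v) hv
  · intro hw
    by_contra hwA
    obtain ⟨p⟩ := hw
    have hedges : ∀ e ∈ p.edges, e ∈ G.edgeSet := by
      intro e he
      have := p.edges_subset_edgeSet he
      rw [SimpleGraph.edgeSet_deleteEdges] at this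
      exact this.1
    obtain ⟨a, b, haA, hbA, hab⟩ := exists_cross (p.transfer G hedges) hu hwA
    rw [SimpleGraph.Walk.edges_transfer] at hab
    have hG' : s(a, b) ∈ (G.deleteEdges {s(u, v)}).edgeSet := p.edges_subset_edgeSet hab
    have hadj : (G.deleteEdges {s(u, v)}).Adj a b := hG'
    have r1 : (G.deleteEdges {s(u, v)}).Reachable u a :=
      reach_del ht.1 hu haA (Sym2.mem_mk_right u v) hv
    have r2 : (G.deleteEdges {s(u, v)}).Reachable b v :=
      reach_del ht.2 (hbA : b ∈ Aᶜ) (hv : v ∈ Aᶜ) (Sym2.mem_mk_left u v) huc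
    exact hnr (r1.trans (hadj.reachable.trans r2))

/-- If `u` and `v` stay reachable after deleting the edge `s(u,v)` from a connected graph,
the resulting graph is connected. -/
lemma connected_del {G : SimpleGraph V} (hc : G.Connected) {u v : V}
    (hr : (G.deleteEdges {s(u, v)}).Reachable u v) : (G.deleteEdges {s(u, v)}).Connected := by
  rw [SimpleGraph.connected_iff]
  refine ⟨?_, hc.nonempty⟩
  have key : ∀ a b : V, G.Adj a b → (G.deleteEdges {s(u, v)}).Reachable a b := by
    intro a b hab
    by_cases h : s(a, b) = s(u, v)
    · rw [Sym2.eq_iff] at h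
      rcases h with ⟨rfl, rfl⟩ | ⟨rfl, rfl⟩
      · exact hr
      · exact hr.symm
    · exact SimpleGraph.Adj.reachable
        (by rw [SimpleGraph.deleteEdges_adj]; exact ⟨hab, by simpa using h⟩)
  intro a b
  obtain ⟨p⟩ := hc.preconnected a b
  induction p with
  | nil => exact SimpleGraph.Reachable.refl _
  | cons h q ih => exact (key _ _ h).trans ih

lemma cobound_del (G : SimpleGraph V) (A : Set V) (f : Sym2 V) :
    cobound (G.deleteEdges {f}) A = cobound G A \ {f} := by
  ext e
  simp only [cobound, Set.mem_setOf_eq, SimpleGraph.edgeSet_deleteEdges, Set.mem_diff,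
    Set.mem_singleton_iff]
  tauto

lemma induce_del_eq {G : SimpleGraph V} {B : Set V} {f : Sym2 V} {z : V}
    (hz : z ∈ f) (hzB : z ∉ B) : (G.deleteEdges {f}).induce B = G.induce B := by
  ext a b
  show (G.deleteEdges {f}).Adj ↑a ↑b ↔ G.Adj ↑a ↑b
  rw [SimpleGraph.deleteEdges_adj]
  refine ⟨fun h => h.1, fun h => ⟨h, fun hmem => ?_⟩⟩
  rw [Set.mem_singleton_iff] at hmem
  rw [← hmem] at hz
  rcases Sym2.mem_iff.mp hz with rfl | rfl
  exacts [hzB a.2, hzB b.2]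

/-- Key auxiliary statement, proved by induction on `k` over all connected graphs:
there are finitely many tight `k`-cuts separating a fixed pair of vertices. -/
lemma aux_tight_cuts : ∀ (k : ℕ) (G : SimpleGraph V), G.Connected → ∀ x y : V,
    {A : Set V | IsCut G A ∧ Tight G A ∧ (cobound G A).ncard = k ∧ x ∈ A ∧ y ∉ A}.Finite := by
  intro k
  induction k with
  | zero =>
    intro G hc x y
    convert Set.finite_empty
    rw [Set.eq_empty_iff_forall_notMem]
    rintro A ⟨hcut, htight, hcard, hx, hy⟩
    obtain ⟨W⟩ := hc.preconnected x y
    obtain ⟨u, v, h1, h2, h3⟩ := exists_cross W hx hy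
    have hmem : s(u, v) ∈ cobound G A := ⟨W.edges_subset_edgeSet h3, u, v, rfl, h1, h2⟩
    rw [Set.ncard_eq_zero hcut] at hcard
    rw [hcard] at hmem
    exact hmem
  | succ k ih =>
    intro G hc x y
    obtain ⟨W⟩ := hc.preconnected x y
    have hT : ∀ u v : V, {A : Set V | IsCut G A ∧ Tight G A ∧ (cobound G A).ncard = k + 1 ∧
        u ∈ A ∧ v ∉ A ∧ s(u, v) ∈ cobound G A}.Finite := by
      intro u v
      by_cases hr : (G.deleteEdges {s(u, v)}).Reachable u v
      · refine (ih (G.deleteEdges {s(u, v)}) (connected_del hc hr) u v).subset ?_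
        rintro A ⟨hcut, htight, hcard, huA, hvA, hmem⟩
        refine ⟨?_, ⟨?_, ?_⟩, ?_, huA, hvA⟩
        · rw [IsCut, cobound_del]; exact hcut.diff
        · rw [induce_del_eq (Sym2.mem_mk_right u v) hvA]; exact htight.1
        · rw [induce_del_eq (Sym2.mem_mk_left u v) (Set.notMem_compl_iff.mpr huA)]; exact htight.2
        · rw [cobound_del, Set.ncard_diff_singleton_of_mem hmem, hcard]; omega
      · refine (Set.finite_singleton {w | (G.deleteEdges {s(u, v)}).Reachable u w}).subset ?_
        rintro A ⟨hcut, htight, hcard, huA, hvA, hmem⟩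
        exact eq_reach htight huA hvA hr
    refine ((W.support.finite_toSet.biUnion fun u _ =>
      W.support.finite_toSet.biUnion fun v _ => hT u v)).subset ?_
    rintro A ⟨hcut, htight, hcard, hx, hy⟩
    obtain ⟨u, v, h1, h2, h3⟩ := exists_cross W hx hy
    refine Set.mem_biUnion (SimpleGraph.Walk.fst_mem_support_of_mem_edges W h3) ?_
    refine Set.mem_biUnion (SimpleGraph.Walk.snd_mem_support_of_mem_edges W h3) ?_
    exact ⟨hcut, htight, hcard, h1, h2, ⟨W.edges_subset_edgeSet h3, u, v, rfl, h1, h2⟩⟩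

/-- for any edge `e` and `k ≥ 1`, there are only finitely many tight cuts `A`
with `|δA| = k` and `e ∈ δA`. -/
theorem finitely_many_tight_cuts (G : SimpleGraph V) (hconn : G.Connected)
    (e : Sym2 V) (k : ℕ) (hk : 1 ≤ k) :
    {A : Set V | IsCut G A ∧ Tight G A ∧ (cobound G A).ncard = k ∧
      e ∈ cobound G A}.Finite := by
  induction e using Sym2.ind with
  | _ x y =>
    apply ((aux_tight_cuts k G hconn x y).union (aux_tight_cuts k G hconn y x)).subset
    rintro A ⟨hcut, htight, hcard, he, u, v, heq, huA, hvA⟩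
    rw [Sym2.eq_iff] at heq
    rcases heq with ⟨rfl, rfl⟩ | ⟨rfl, rfl⟩
    · exact Or.inl ⟨hcut, htight, hcard, huA, hvA⟩
    · exact Or.inr ⟨hcut, htight, hcard, huA, hvA⟩
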